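/- Let β ∈ (0,1), let L : (0,∞) → (0,∞) be a measurable function that is slowly varying at infinity (i.e. for every c > 0, L(cx)/L(x) → 1 as x → ∞), and let ν be a Borel measure on (0,∞) with ν((0,x]) = x^β L(x) for all x > 0. Then for every λ > 0, lim_{t→∞} (t^β L(t))^{−1} ∫_{(0,∞)} (1 − e^{−λt/x}) dν(x) = Γ(1−β) λ^β. -/

import Mathlib

open MeasureTheory Filter

/-- Let `β ∈ (0,1)`, let `L` be a measurable, positive, slowly varying function, and
let `ν` be a Borel measure on `(0,∞)` with `ν((0,x]) = x^β L(x)` for all `x > 0`.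
Then for every `λ > 0`,
`lim_{t→∞} (t^β L(t))^{−1} ∫_{(0,∞)} (1 − e^{−λt/x}) dν(x) = Γ(1−β) λ^β`. -/
theorem karlin_regular_variation_integral
    (β : ℝ) (hβ : β ∈ Set.Ioo (0 : ℝ) 1)
    (L : ℝ → ℝ) (hLmeas : Measurable L) (hLpos : ∀ x > (0 : ℝ), 0 < L x)
    (hLslow : ∀ c > (0 : ℝ), Tendsto (fun x => L (c * x) / L x) atTop (nhds 1))
    (ν : Measure ℝ) (hν : ∀ x > (0 : ℝ), ν (Set.Ioc 0 x) = ENNReal.ofReal (x ^ β * L x))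
    (l : ℝ) (hl : 0 < l) :
    Tendsto
      (fun t : ℝ =>
        (∫⁻ x in Set.Ioi (0 : ℝ), ENNReal.ofReal (1 - Real.exp (-(l * t / x))) ∂ν).toReal
          / (t ^ β * L t))
      atTop (nhds (Real.Gamma (1 - β) * l ^ β)) := by
  obtain ⟨hβ0, hβ1⟩ := hβ
  set β' : ℝ := (1 + β) / 2 with hβ'def
  have hβ'0 : 0 < β' := by positivity
  have hββ' : β < β' := by rw [hβ'def]; linarith
  have hβ'1 : β' < 1 := by rw [hβ'def]; linarith
  set U : ℝ → ℝ := fun u => u ^ β * L u with hUdef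
  have hUpos : ∀ u > (0:ℝ), 0 < U u := by
    intro u hu
    exact mul_pos (Real.rpow_pos_of_pos hu β) (hLpos u hu)
  -- monotonicity of U on (0,∞)
  have hUmono : ∀ a b : ℝ, 0 < a → a ≤ b → U a ≤ U b := by
    intro a b ha hab
    have hb : 0 < b := lt_of_lt_of_le ha hab
    have := measure_mono (μ := ν) (Set.Ioc_subset_Ioc_right hab : Set.Ioc 0 a ⊆ Set.Ioc 0 b)
    rw [hν a ha, hν b hb] at this
    exact (ENNReal.ofReal_le_ofReal_iff (hUpos b hb).le).mp this
  -- doubling bound eventually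
  have hdouble : ∀ᶠ u in atTop, U (2 * u) ≤ 2 ^ β' * U u := by
    have h2 : (1:ℝ) < 2 ^ (β' - β) := by
      refine (Real.one_lt_rpow_iff_of_pos (by norm_num)).mpr (Or.inl ⟨by norm_num, by linarith⟩)
    have hev : ∀ᶠ u in atTop, L (2 * u) / L u ≤ 2 ^ (β' - β) :=
      (hLslow 2 (by norm_num)).eventually (eventually_le_nhds h2)
    filter_upwards [hev, eventually_gt_atTop (0:ℝ)] with u hu hu0
    have hL2 : L (2 * u) ≤ 2 ^ (β' - β) * L u := by
      rw [div_le_iff₀ (hLpos u hu0)] at hu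
      linarith
    have h2u : (2 * u) ^ β = 2 ^ β * u ^ β :=
      Real.mul_rpow (by norm_num) hu0.le
    calc U (2 * u) = (2*u) ^ β * L (2*u) := rfl
      _ ≤ (2*u) ^ β * (2 ^ (β' - β) * L u) := by
          apply mul_le_mul_of_nonneg_left hL2 (Real.rpow_nonneg (by positivity) β)
      _ = 2 ^ β' * U u := by
          rw [h2u, hUdef]
          rw [show (2:ℝ) ^ β' = 2 ^ β * 2 ^ (β' - β) by
            rw [← Real.rpow_add (by norm_num)]; ring_nf]
          ring
  obtain ⟨T₀, hT₀⟩ := eventually_atTop.mp hdouble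
  set T : ℝ := max T₀ 1 with hTdef
  have hT1 : (1:ℝ) ≤ T := le_max_right _ _
  have hTd : ∀ u, T ≤ u → U (2 * u) ≤ 2 ^ β' * U u := fun u hu =>
    hT₀ u (le_trans (le_max_left _ _) hu)
  -- iterated doubling
  have hiter : ∀ k : ℕ, ∀ u, T ≤ u → U ((2:ℝ) ^ k * u) ≤ ((2:ℝ) ^ k) ^ β' * U u := by
    intro k
    induction k with
    | zero => intro u hu; simp
    | succ k ih =>
      intro u hu
      have hu0 : 0 < u := lt_of_lt_of_le (by linarith) hu
      have h2ku : T ≤ (2:ℝ) ^ k * u := by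
        calc T ≤ u := hu
          _ ≤ (2:ℝ)^k * u := le_mul_of_one_le_left hu0.le (one_le_pow₀ (by norm_num))
      calc U ((2:ℝ) ^ (k+1) * u) = U (2 * ((2:ℝ)^k * u)) := by ring_nf
        _ ≤ 2 ^ β' * U ((2:ℝ)^k * u) := hTd _ h2ku
        _ ≤ 2 ^ β' * (((2:ℝ)^k) ^ β' * U u) := by
            apply mul_le_mul_of_nonneg_left (ih u hu) (Real.rpow_nonneg (by norm_num) _)
        _ = ((2:ℝ) ^ (k+1)) ^ β' * U u := by
            rw [pow_succ, Real.mul_rpow (by positivity) (by norm_num)]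
            ring
  -- key bound
  have hbound : ∀ t, T ≤ t → ∀ s, 0 < s →
      U (l * t / s) ≤ max 1 ((2 * l / s) ^ β') * U t := by
    intro t hT s hs
    have ht0 : 0 < t := lt_of_lt_of_le (by linarith) hT
    have hUt : 0 ≤ U t := (hUpos t ht0).le
    have hlts : 0 < l * t / s := by positivity
    rcases le_or_gt s l with hsl | hsl
    · -- s ≤ l : use iterated doubling
      set k : ℕ := ⌈Real.logb 2 (l / s)⌉₊ with hkdef
      have hls1 : 1 ≤ l / s := (one_le_div hs).mpr hsl
      have hlog0 : 0 ≤ Real.logb 2 (l / s) := Real.logb_nonneg (by norm_num) hls1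
      have hk1 : l / s ≤ (2:ℝ) ^ k := by
        have h1 : l / s = (2:ℝ) ^ Real.logb 2 (l / s) :=
          (Real.rpow_logb (by norm_num) (by norm_num) (by positivity)).symm
        rw [h1, ← Real.rpow_natCast 2 k]
        exact Real.rpow_le_rpow_left_iff (by norm_num) |>.mpr (Nat.le_ceil _)
      have hk2 : (2:ℝ) ^ k ≤ 2 * (l / s) := by
        have h2 : (k:ℝ) ≤ Real.logb 2 (l / s) + 1 := (Nat.ceil_lt_add_one hlog0).le
        calc (2:ℝ) ^ k = (2:ℝ) ^ (k:ℝ) := (Real.rpow_natCast 2 k).symm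
          _ ≤ (2:ℝ) ^ (Real.logb 2 (l / s) + 1) :=
              Real.rpow_le_rpow_left_iff (by norm_num) |>.mpr h2
          _ = 2 * (l / s) := by
              rw [Real.rpow_add (by norm_num), Real.rpow_logb (by norm_num) (by norm_num)
                (by positivity), Real.rpow_one]
              ring
      have hle : l * t / s ≤ (2:ℝ) ^ k * t := by
        have : l * t / s = (l / s) * t := by ring
        rw [this]
        exact mul_le_mul_of_nonneg_right hk1 ht0.le
      calc U (l * t / s) ≤ U ((2:ℝ) ^ k * t) := hUmono _ _ hlts hle
        _ ≤ ((2:ℝ) ^ k) ^ β' * U t := hiter k t hT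
        _ ≤ ((2 * l / s) ^ β') * U t := by
            apply mul_le_mul_of_nonneg_right _ hUt
            apply Real.rpow_le_rpow (by positivity) _ hβ'0.le
            calc (2:ℝ) ^ k ≤ 2 * (l / s) := hk2
              _ = 2 * l / s := by ring
        _ ≤ max 1 ((2 * l / s) ^ β') * U t :=
            mul_le_mul_of_nonneg_right (le_max_right _ _) hUt
    · -- l < s : l * t / s ≤ t
      have hle : l * t / s ≤ t := by
        rw [div_le_iff₀ hs]
        nlinarith
      calc U (l * t / s) ≤ U t := hUmono _ _ hlts hle
        _ = 1 * U t := (one_mul _).symm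
        _ ≤ max 1 ((2 * l / s) ^ β') * U t :=
            mul_le_mul_of_nonneg_right (le_max_left _ _) hUt
  -- the dominating function
  set Bnd : ℝ → ℝ := fun s => Real.exp (-s) * max 1 ((2 * l / s) ^ β') with hBdef
  have hBmeas : Measurable Bnd := by
    apply (Real.measurable_exp.comp measurable_neg).mul
    exact measurable_const.max ((measurable_const.div measurable_id).pow measurable_const)
  have hBint : IntegrableOn Bnd (Set.Ioi 0) := by
    have hg : IntegrableOn
        (fun s => Real.exp (-s) + (2*l) ^ β' * (Real.exp (-s) * s ^ ((1 - β') - 1)))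
        (Set.Ioi 0) := by
      apply Integrable.add
      · exact (exp_neg_integrableOn_Ioi 0 one_pos).congr_fun
          (fun s _ => by norm_num) measurableSet_Ioi
      · exact (Real.GammaIntegral_convergent (by linarith : (0:ℝ) < 1 - β')).const_mul _
    apply Integrable.mono' hg hBmeas.aestronglyMeasurable
    rw [ae_restrict_iff' measurableSet_Ioi]
    filter_upwards with s hs
    have hs0 : 0 < s := hs
    have hB0 : 0 ≤ Bnd s := by
      apply mul_nonneg (Real.exp_nonneg _)
      exact le_trans zero_le_one (le_max_left _ _)
    rw [Real.norm_of_nonneg hB0]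
    have hmax : max 1 ((2*l/s) ^ β') ≤ 1 + (2*l/s) ^ β' :=
      max_le (le_add_of_nonneg_right (by positivity)) (le_add_of_nonneg_left zero_le_one)
    have hrw : (2*l/s) ^ β' = (2*l) ^ β' * s ^ ((1 - β') - 1) := by
      rw [Real.div_rpow (by positivity) hs0.le,
        show (1 - β') - 1 = -β' by ring, Real.rpow_neg hs0.le]
      ring
    calc Bnd s ≤ Real.exp (-s) * (1 + (2*l/s) ^ β') :=
          mul_le_mul_of_nonneg_left hmax (Real.exp_nonneg _)
      _ = Real.exp (-s) + (2*l) ^ β' * (Real.exp (-s) * s ^ ((1 - β') - 1)) := by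
          rw [hrw]; ring
  -- the family of functions
  set F : ℝ → ℝ → ℝ :=
    fun t s => Real.exp (-s) * ((l*t/s) ^ β * L (l*t/s)) / (t ^ β * L t) with hFdef
  have hHmeas : ∀ t : ℝ, Measurable (fun s => Real.exp (-s) * ((l*t/s) ^ β * L (l*t/s))) := by
    intro t
    apply (Real.measurable_exp.comp measurable_neg).mul
    exact ((measurable_const.div measurable_id).pow measurable_const).mul
      (hLmeas.comp (measurable_const.div measurable_id))
  have hFmeas : ∀ t : ℝ, AEStronglyMeasurable (F t) (volume.restrict (Set.Ioi 0)) :=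
    fun t => ((hHmeas t).div_const _).aestronglyMeasurable
  -- eventual domination
  have hdom : ∀ᶠ t in atTop, ∀ᵐ s ∂(volume.restrict (Set.Ioi (0:ℝ))), ‖F t s‖ ≤ Bnd s := by
    filter_upwards [eventually_ge_atTop T] with t hT
    rw [ae_restrict_iff' measurableSet_Ioi]
    filter_upwards with s hs
    have hs0 : 0 < s := hs
    have ht0 : 0 < t := lt_of_lt_of_le (by linarith) hT
    have hUt : 0 < U t := hUpos t ht0
    have hF0 : 0 ≤ F t s := by
      apply div_nonneg _ hUt.le
      have : (0:ℝ) < l * t / s := by positivity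
      exact mul_nonneg (Real.exp_nonneg _) (mul_nonneg (by positivity) (hLpos _ this).le)
    rw [Real.norm_of_nonneg hF0, hFdef]
    rw [div_le_iff₀ hUt]
    calc Real.exp (-s) * ((l*t/s) ^ β * L (l*t/s))
        = Real.exp (-s) * U (l*t/s) := rfl
      _ ≤ Real.exp (-s) * (max 1 ((2 * l / s) ^ β') * U t) :=
          mul_le_mul_of_nonneg_left (hbound t hT s hs0) (Real.exp_nonneg _)
      _ = Bnd s * U t := by rw [hBdef]; ring
  -- pointwise limit
  have hlim : ∀ᵐ s ∂(volume.restrict (Set.Ioi (0:ℝ))),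
      Tendsto (fun t => F t s) atTop (nhds (Real.exp (-s) * (l/s) ^ β)) := by
    rw [ae_restrict_iff' measurableSet_Ioi]
    filter_upwards with s hs
    have hs0 : 0 < s := hs
    have h1 : Tendsto (fun t => Real.exp (-s) * (l/s) ^ β * (L ((l/s) * t) / L t))
        atTop (nhds (Real.exp (-s) * (l/s) ^ β * 1)) :=
      tendsto_const_nhds.mul (hLslow (l/s) (by positivity))
    rw [mul_one] at h1
    apply h1.congr'
    filter_upwards [eventually_gt_atTop (0:ℝ)] with t ht0
    have hLt : L t ≠ 0 := (hLpos t ht0).ne'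
    have htβ : t ^ β ≠ 0 := (Real.rpow_pos_of_pos ht0 β).ne'
    have hmul : (l*t/s) = (l/s) * t := by ring
    have hrpow : ((l/s) * t) ^ β = (l/s) ^ β * t ^ β :=
      Real.mul_rpow (by positivity) ht0.le
    rw [hFdef]
    simp only [hmul, hrpow]
    field_simp
  -- dominated convergence
  have hDCT := tendsto_integral_filter_of_dominated_convergence
    (μ := volume.restrict (Set.Ioi (0:ℝ))) Bnd
    (Eventually.of_forall hFmeas) hdom hBint hlim
  -- value of the limit integral
  have hval : ∫ s in Set.Ioi (0:ℝ), Real.exp (-s) * (l/s) ^ β = Real.Gamma (1 - β) * l ^ β := by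
    have hcongr : ∀ s ∈ Set.Ioi (0:ℝ),
        Real.exp (-s) * (l/s) ^ β = l ^ β * (Real.exp (-s) * s ^ ((1 - β) - 1)) := by
      intro s hs
      have hs0 : 0 < s := hs
      rw [Real.div_rpow hl.le hs0.le, show (1 - β) - 1 = -β by ring,
        Real.rpow_neg hs0.le]
      field_simp
    rw [setIntegral_congr_fun measurableSet_Ioi hcongr, integral_const_mul _ _,
      ← Real.Gamma_eq_integral (by linarith : (0:ℝ) < 1 - β)]
    ring
  rw [hval] at hDCT
  apply hDCT.congr'
  filter_upwards [eventually_ge_atTop T] with t hT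
  have ht0 : 0 < t := lt_of_lt_of_le (by linarith) hT
  have hlt0 : 0 < l * t := mul_pos hl ht0
  -- layer cake formula
  have hexp : ∀ y : ℝ, ∫ u in (0:ℝ)..y, Real.exp (-u) = 1 - Real.exp (-y) := by
    intro y; simp [integral_exp_neg_Ioi]
  have hlc : (∫⁻ x in Set.Ioi (0:ℝ), ENNReal.ofReal (1 - Real.exp (-(l * t / x))) ∂ν)
      = ∫⁻ s in Set.Ioi (0:ℝ),
          ENNReal.ofReal (Real.exp (-s) * ((l*t/s) ^ β * L (l*t/s))) := by
    have f_nn : 0 ≤ᵐ[ν.restrict (Set.Ioi (0:ℝ))] fun x => l * t / x := by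
      refine Filter.eventually_of_mem (self_mem_ae_restrict measurableSet_Ioi) ?_
      intro x hx
      exact (div_pos hlt0 hx).le
    have key := lintegral_comp_eq_lintegral_meas_le_mul (μ := ν.restrict (Set.Ioi (0:ℝ)))
      (f := fun x => l * t / x) (g := fun s => Real.exp (-s)) f_nn
      (measurable_const.div measurable_id).aemeasurable
      (fun u _ => (Real.continuous_exp.comp continuous_neg).intervalIntegrable 0 u)
      (Eventually.of_forall fun s => Real.exp_nonneg _)
    simp only [hexp] at key
    rw [key]
    apply setLIntegral_congr_fun measurableSet_Ioi
    intro s hs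
    dsimp only
    have hs0 : 0 < s := hs
    have hmeas : MeasurableSet {a : ℝ | s ≤ l * t / a} :=
      measurableSet_le measurable_const (measurable_const.div measurable_id)
    have hset : {a : ℝ | s ≤ l * t / a} ∩ Set.Ioi 0 = Set.Ioc 0 (l * t / s) := by
      ext x
      simp only [Set.mem_inter_iff, Set.mem_setOf_eq, Set.mem_Ioi, Set.mem_Ioc]
      constructor
      · rintro ⟨h1, h2⟩
        refine ⟨h2, ?_⟩
        rw [le_div_iff₀ h2] at h1
        rw [le_div_iff₀ hs0]
        nlinarith
      · rintro ⟨h2, h1⟩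
        refine ⟨?_, h2⟩
        rw [le_div_iff₀ hs0] at h1
        rw [le_div_iff₀ h2]
        nlinarith
    rw [Measure.restrict_apply hmeas, hset, hν _ (by positivity),
      mul_comm, ← ENNReal.ofReal_mul (Real.exp_nonneg _)]
  -- integrability of the layer-cake integrand
  have hHnn : ∀ s : ℝ, 0 < s → 0 ≤ Real.exp (-s) * ((l*t/s) ^ β * L (l*t/s)) := by
    intro s hs0
    have : (0:ℝ) < l * t / s := by positivity
    exact mul_nonneg (Real.exp_nonneg _) (mul_nonneg (by positivity) (hLpos _ this).le)
  have hHint : IntegrableOn (fun s => Real.exp (-s) * ((l*t/s) ^ β * L (l*t/s)))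
      (Set.Ioi (0:ℝ)) := by
    apply Integrable.mono' (hBint.mul_const (U t)) (hHmeas t).aestronglyMeasurable
    rw [ae_restrict_iff' measurableSet_Ioi]
    filter_upwards with s hs
    have hs0 : 0 < s := hs
    rw [Real.norm_of_nonneg (hHnn s hs0)]
    calc Real.exp (-s) * ((l*t/s) ^ β * L (l*t/s))
        = Real.exp (-s) * U (l*t/s) := rfl
      _ ≤ Real.exp (-s) * (max 1 ((2 * l / s) ^ β') * U t) :=
          mul_le_mul_of_nonneg_left (hbound t hT s hs0) (Real.exp_nonneg _)
      _ = Bnd s * U t := by rw [hBdef]; ring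
  have hnnae : 0 ≤ᵐ[volume.restrict (Set.Ioi (0:ℝ))]
      fun s => Real.exp (-s) * ((l*t/s) ^ β * L (l*t/s)) := by
    rw [EventuallyLE, ae_restrict_iff' measurableSet_Ioi]
    filter_upwards with s hs using hHnn s hs
  rw [hlc, ← ofReal_integral_eq_lintegral_ofReal hHint hnnae,
    ENNReal.toReal_ofReal (setIntegral_nonneg measurableSet_Ioi fun s hs => hHnn s hs)]
  rw [hFdef]
  exact integral_div _ _
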